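/- Let β > 0, suppose T maps W into W and ⟨T g, g⟩ ≥ A‖g‖² for every g ∈ W with A ≥ 0, and let f_* ∈ W and f̃ ∈ W satisfy β • f̃ + T f̃ = T f_*. Then the bias satisfies ‖f̃ − f_*‖ ≤ (β/(β + A)) · ‖f_*‖. -/

import Mathlib

open scoped RealInnerProductSpace BigOperators

/-- Bias bound: if `β > 0`, `T` maps `W` into `W` with
`⟪T g, g⟫ ≥ A‖g‖²` on `W` (`A ≥ 0`), `f_* ∈ W`, `f̃ ∈ W` and
`β • f̃ + T f̃ = T f_*`, then `‖f̃ − f_*‖ ≤ (β/(β+A))·‖f_*‖`. -/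
theorem bias_bound
    {N : ℕ} (W : Submodule ℝ (EuclideanSpace ℝ (Fin N)))
    (S : Finset (Fin N))
    (T : EuclideanSpace ℝ (Fin N) →L[ℝ] EuclideanSpace ℝ (Fin N))
    (hT : ∀ f : EuclideanSpace ℝ (Fin N), T f =
      ∑ u ∈ S, f u • (W.orthogonalProjectionOnto (EuclideanSpace.single u (1 : ℝ)) :
        EuclideanSpace ℝ (Fin N)))
    (β A : ℝ) (hβ : 0 < β) (hA : 0 ≤ A)
    (hTW : ∀ g ∈ W, T g ∈ W)
    (hlow : ∀ g ∈ W, A * ‖g‖ ^ 2 ≤ ⟪T g, g⟫)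
    (fstar ftil : EuclideanSpace ℝ (Fin N))
    (hfstarW : fstar ∈ W) (hftilW : ftil ∈ W)
    (heq : β • ftil + T ftil = T fstar) :
    ‖ftil - fstar‖ ≤ (β / (β + A)) * ‖fstar‖ := by
  set e := ftil - fstar with he
  have heW : e ∈ W := W.sub_mem hftilW hfstarW
  have hTe : T e = -(β • ftil) := by
    have : T (ftil - fstar) = T ftil - T fstar := map_sub T ftil fstar
    rw [he, this, ← heq]
    abel
  have h1 : A * ‖e‖ ^ 2 ≤ ⟪T e, e⟫ := hlow e heW
  have h2 : ⟪T e, e⟫ = -β * (‖e‖ ^ 2 + ⟪fstar, e⟫) := by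
    have hft : ftil = e + fstar := by rw [he]; abel
    rw [hTe, inner_neg_left, real_inner_smul_left, hft, inner_add_left,
      real_inner_self_eq_norm_sq]
    ring
  have h3 : (β + A) * ‖e‖ ^ 2 ≤ β * (‖fstar‖ * ‖e‖) := by
    have habs : -⟪fstar, e⟫ ≤ ‖fstar‖ * ‖e‖ := by
      have := abs_real_inner_le_norm fstar e
      linarith [neg_abs_le (⟪fstar, e⟫)]
    nlinarith [h1, h2]
  rcases eq_or_lt_of_le (norm_nonneg e) with h0 | h0
  · rw [← h0]
    positivity
  · have hβA : 0 < β + A := by linarith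
    rw [div_mul_eq_mul_div, le_div_iff₀ hβA]
    have : (β + A) * ‖e‖ * ‖e‖ ≤ β * ‖fstar‖ * ‖e‖ := by nlinarith
    have := le_of_mul_le_mul_right this h0
    linarith
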